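/- (Culler) Let F be a finitely generated free group and let z be a nontrivial element of the commutator subgroup [F, F]. Then there exists a constant c > 0 such that for every integer n ≥ 1 and every g ≥ 1, if zⁿ can be written as a product of g commutators, zⁿ = ∏_{i=1}^g [x_i, y_i] with x_i, y_i ∈ F, then g ≥ c·n. -/

import Mathlib

open scoped commutatorElement

namespace CullerAux
open List

variable {Λ : Type*} [DecidableEq Λ]

/-- number of (possibly overlapping) occurrences of `w` in `l`. -/
def cnt (w : List Λ) : List Λ → ℕ
  | [] => 0
  | a :: s => cnt w s + (if w <+: (a :: s) then 1 else 0)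

@[simp] lemma cnt_nil (w : List Λ) : cnt w [] = 0 := rfl

lemma cnt_cons (w : List Λ) (a : Λ) (s : List Λ) :
    cnt w (a :: s) = cnt w s + (if w <+: (a :: s) then 1 else 0) := rfl

lemma cnt_append_ge (w : List Λ) : ∀ u v : List Λ, cnt w u + cnt w v ≤ cnt w (u ++ v)
  | [], v => by simp
  | a :: u, v => by
    rw [cons_append, cnt_cons, cnt_cons]
    have h1 := cnt_append_ge w u v
    have h2 : (if w <+: (a :: u) then 1 else 0) ≤ (if w <+: (a :: (u ++ v)) then 1 else 0) := by
      split_ifs with h h' h'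
      · rfl
      · exact absurd (by rw [← cons_append]; exact h.trans ((a :: u).prefix_append v)) h'
      all_goals omega
    omega

lemma cnt_append_le_left (w : List Λ) : ∀ u v : List Λ, cnt w (u ++ v) ≤ u.length + cnt w v
  | [], v => by simp
  | a :: u, v => by
    rw [cons_append, cnt_cons]
    have h1 := cnt_append_le_left w u v
    have h2 : (if w <+: (a :: (u ++ v)) then 1 else 0) ≤ 1 := by split_ifs <;> omega
    simp only [length_cons]
    omega

lemma prefix_of_prefix_append {w u v : List Λ} (h : w <+: u ++ v) (hl : w.length ≤ u.length) :
    w <+: u := by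
  have hw : w = u.take w.length := by
    rw [prefix_iff_eq_take] at h
    conv_lhs => rw [h]
    rw [take_append, Nat.sub_eq_zero_of_le hl, take_zero, append_nil]
  exact prefix_iff_eq_take.2 hw

lemma cnt_append_le (w : List Λ) : ∀ u v : List Λ,
    cnt w (u ++ v) ≤ cnt w u + ((w.length - 1) + cnt w v)
  | [], v => by simp
  | a :: u, v => by
    by_cases h : w.length ≤ (a :: u).length
    · rw [cons_append, cnt_cons, cnt_cons]
      have h1 := cnt_append_le w u v
      have h2 : (if w <+: (a :: (u ++ v)) then 1 else 0) ≤ (if w <+: (a :: u) then 1 else 0) := by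
        split_ifs with hp hp' hp'
        · rfl
        · exact absurd (prefix_of_prefix_append (by rw [← cons_append] at hp; exact hp) h) hp'
        all_goals omega
      omega
    · have h1 := cnt_append_le_left w (a :: u) v
      have h2 : (a :: u).length ≤ w.length - 1 := by simp at h ⊢; omega
      omega

lemma cnt_concat (w : List Λ) (hw : w ≠ []) : ∀ (l : List Λ) (a : Λ),
    cnt w (l ++ [a]) = cnt w l + (if w <:+ l ++ [a] then 1 else 0)
  | [], a => by
    have hl : 1 ≤ w.length := length_pos_iff.2 hw
    have e3 : w <+: [a] ↔ w = [a] := by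
      constructor
      · intro h
        exact h.eq_of_length (by have := h.length_le; simp at this ⊢; omega)
      · rintro rfl; exact prefix_refl _
    have e4 : w <:+ [a] ↔ w = [a] := by
      constructor
      · intro h
        exact h.eq_of_length (by have := h.length_le; simp at this ⊢; omega)
      · rintro rfl; exact suffix_refl _
    simp only [nil_append, cnt_cons, cnt_nil, e3, e4]
  | b :: l, a => by
    rw [cons_append, cnt_cons, cnt_concat w hw l a, cnt_cons]
    have key : (if w <:+ l ++ [a] then 1 else 0) + (if w <+: b :: (l ++ [a]) then 1 else 0)
        = (if w <+: b :: l then 1 else 0) + (if w <:+ b :: (l ++ [a]) then 1 else 0) := by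
      by_cases hlen : w.length ≤ l.length + 1
      · have e1 : (w <+: b :: (l ++ [a])) ↔ (w <+: b :: l) := by
          constructor
          · intro h
            exact prefix_of_prefix_append (u := b :: l) h (by rw [length_cons]; exact hlen)
          · intro h
            rw [← cons_append]
            exact h.trans ((b :: l).prefix_append [a])
        have e2 : (w <:+ b :: (l ++ [a])) ↔ (w <:+ l ++ [a]) := by
          rw [suffix_cons_iff]
          constructor
          · rintro (rfl | h)
            · rw [length_cons, length_append, length_singleton] at hlen; omega
            · exact h
          · exact Or.inr
        simp only [e1, e2]
        split_ifs <;> omega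
      · push_neg at hlen
        have e1 : ¬ (w <+: b :: l) := fun h => by have := h.length_le; simp at this; omega
        have e2 : ¬ (w <:+ l ++ [a]) := fun h => by have := h.length_le; simp at this; omega
        have e3 : (w <+: b :: (l ++ [a])) ↔ w = b :: (l ++ [a]) := by
          constructor
          · intro h
            exact h.eq_of_length (by
              have h2 := h.length_le
              rw [length_cons, length_append, length_singleton] at h2 ⊢
              omega)
          · rintro rfl; exact prefix_refl _
        have e4 : (w <:+ b :: (l ++ [a])) ↔ w = b :: (l ++ [a]) := by
          constructor
          · intro h
            exact h.eq_of_length (by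
              have h2 := h.length_le
              rw [length_cons, length_append, length_singleton] at h2 ⊢
              omega)
          · rintro rfl; exact suffix_refl _
        simp only [e3, e4, if_neg e1, if_neg e2]
        all_goals split_ifs <;> omega
    omega

lemma cnt_self (w : List Λ) (hw : w ≠ []) : 1 ≤ cnt w w := by
  cases w with
  | nil => exact absurd rfl hw
  | cons a s => rw [cnt_cons]; simp [prefix_refl]

lemma cnt_eq_zero (w : List Λ) : ∀ l : List Λ, ¬ (w <:+: l) → cnt w l = 0
  | [], _ => rfl
  | a :: s, h => by
    rw [cnt_cons, cnt_eq_zero w s (fun hi => h (hi.trans (suffix_cons a s).isInfix)),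
      if_neg (fun hp => h hp.isInfix)]

end CullerAux

namespace CullerAux
set_option linter.unusedSectionVars false
open FreeGroup List

variable {β : Type*} [DecidableEq β]

/-- the involution on letters. -/
def invol (p : β × Bool) : β × Bool := (p.1, !p.2)

@[simp] lemma invol_invol (p : β × Bool) : invol (invol p) = p := by simp [invol]

lemma invol_ne (p : β × Bool) : invol p ≠ p := by
  simp [invol, Prod.ext_iff]

lemma invRev_def (l : List (β × Bool)) : invRev l = (l.map invol).reverse := rfl

@[simp] lemma invRev_cons (a : β × Bool) (l : List (β × Bool)) :
    invRev (a :: l) = invRev l ++ [invol a] := by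
  simp [invRev_def]

@[simp] lemma invRev_append' (u v : List (β × Bool)) :
    invRev (u ++ v) = invRev v ++ invRev u := by
  simp [invRev_def]

@[simp] lemma invRev_singleton (a : β × Bool) : invRev [a] = [invol a] := by
  simp [invRev_def]

lemma suffix_invRev_iff {w m : List (β × Bool)} : w <:+ invRev m ↔ invRev w <+: m := by
  constructor
  · rintro ⟨s, hs⟩
    refine ⟨invRev s, ?_⟩
    have := congrArg invRev hs
    rwa [invRev_append', invRev_invRev] at this
  · rintro ⟨t, ht⟩
    refine ⟨invRev t, ?_⟩
    rw [← ht, invRev_append', invRev_invRev]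

lemma cnt_invRev (w : List (β × Bool)) (hw : w ≠ []) :
    ∀ l : List (β × Bool), cnt w (invRev l) = cnt (invRev w) l
  | [] => rfl
  | a :: l => by
    rw [invRev_cons, cnt_concat w hw, cnt_invRev w hw l, cnt_cons]
    congr 1
    rw [← invRev_cons]
    simp only [suffix_invRev_iff]

/-- reduced words. -/
def Reduced (l : List (β × Bool)) : Prop := l.Chain' (fun p q => q ≠ invol p)

lemma reduced_reduce (L : List (β × Bool)) : Reduced (reduce L) := by
  rw [Reduced, List.Chain', isChain_iff_getElem]
  intro i hi
  by_contra hne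
  replace hne : (reduce L).get ⟨i + 1, by omega⟩ = invol ((reduce L).get ⟨i, by omega⟩) := by
    simpa using hne
  have hdecomp : reduce L = (reduce L).take i ++ (reduce L).get ⟨i, by omega⟩ ::
      (reduce L).get ⟨i + 1, by omega⟩ :: (reduce L).drop (i + 2) := by
    rw [get_eq_getElem, get_eq_getElem, ← drop_eq_getElem_cons (by omega),
      ← drop_eq_getElem_cons (by omega), take_append_drop]
  rcases hget : (reduce L).get ⟨i, by omega⟩ with ⟨x, b⟩
  rw [hget, hne, hget] at hdecomp
  exact reduce.not hdecomp

lemma reduced_toWord (x : FreeGroup β) : Reduced x.toWord := by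
  rw [← reduce_toWord]; exact reduced_reduce _

lemma Reduced.reduce_eq {l : List (β × Bool)} (h : Reduced l) : reduce l = l := by
  have hred : Red l (reduce l) := reduce.red
  rcases hred.cases_head with heq | ⟨m, hstep, -⟩
  · exact heq.symm
  · exfalso
    cases hstep with
    | @not L₁ L₂ x b =>
      have h2 : List.Chain' (fun p q => q ≠ invol p) ((x, b) :: (x, !b) :: L₂) :=
        ((isChain_append.1 h).2.1)
      exact (isChain_cons_cons.1 h2).1 rfl

end CullerAux

namespace CullerAux
set_option linter.unusedSectionVars false
open FreeGroup List

variable {β : Type*} [DecidableEq β]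

lemma take_append_of_le {Λ : Type*} {u v : List Λ} {n : ℕ} (h : n ≤ u.length) :
    (u ++ v).take n = u.take n := by
  rw [take_append, Nat.sub_eq_zero_of_le h, take_zero, append_nil]

lemma toWord_mul (x y : FreeGroup β) : (x * y).toWord = reduce (x.toWord ++ y.toWord) := by
  conv_lhs => rw [← mk_toWord (x := x), ← mk_toWord (x := y)]
  rw [mul_mk, toWord_mk]

lemma mul_decomp : ∀ u v : List (β × Bool), Reduced u → Reduced v →
    ∃ a b c, u = a ++ c ∧ v = invRev c ++ b ∧ reduce (u ++ v) = a ++ b := by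
  intro u
  induction u using List.reverseRecOn with
  | nil =>
    intro v _ hv
    exact ⟨[], v, [], by simp, by simp [invRev_def], by simpa using hv.reduce_eq⟩
  | append_singleton u' x IH =>
    intro v hu hv
    by_cases hr : Reduced ((u' ++ [x]) ++ v)
    · exact ⟨u' ++ [x], v, [], by simp, by simp [invRev_def], by rw [hr.reduce_eq]⟩
    · have hu' : Reduced u' := hu.prefix (u'.prefix_append [x])
      rw [Reduced, List.Chain', isChain_append] at hr
      push_neg at hr
      obtain ⟨p, hp, q, hq, hpq⟩ := hr hu hv
      rw [getLast?_concat, Option.mem_some_iff] at hp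
      replace hpq : q = invol x := by rw [hpq, ← hp]
      cases v with
      | nil => simp at hq
      | cons q' v' =>
        obtain rfl : q' = q := by simpa using hq
        subst hpq
        have hv' : Reduced v' := hv.tail
        obtain ⟨a, b, c', h1, h2, h3⟩ := IH v' hu' hv'
        refine ⟨a, b, c' ++ [x], by rw [h1, append_assoc], ?_, ?_⟩
        · rw [invRev_append', invRev_singleton, h2]
          simp
        · have hstep : Red.Step (u' ++ x :: invol x :: v') (u' ++ v') := by
            have := @Red.Step.not β u' v' x.1 x.2
            simpa [invol] using this
          have heq : reduce ((u' ++ [x]) ++ (invol x :: v')) = reduce (u' ++ v') :=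
            (show (u' ++ [x]) ++ (invol x :: v') = u' ++ x :: invol x :: v' by simp) ▸
              reduce.Step.eq hstep
          rw [heq, h3]

/-- `n` concatenated copies of `w`. -/
def joinN (n : ℕ) (w : List (β × Bool)) : List (β × Bool) := (List.replicate n w).flatten

@[simp] lemma joinN_zero (w : List (β × Bool)) : joinN 0 w = [] := rfl

lemma joinN_succ (n : ℕ) (w : List (β × Bool)) : joinN (n + 1) w = w ++ joinN n w := by
  rw [joinN, List.replicate_succ, List.flatten_cons]; rfl

lemma cnt_joinN (w : List (β × Bool)) (hw : w ≠ []) : ∀ n, n ≤ cnt w (joinN n w)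
  | 0 => Nat.zero_le _
  | n + 1 => by
    rw [joinN_succ]
    have h1 := cnt_append_ge w w (joinN n w)
    have h2 := cnt_joinN w hw n
    have h3 := cnt_self w hw
    omega

/-- cyclically reduced words. -/
def CycRed (w : List (β × Bool)) : Prop :=
  ∀ p q, w.getLast? = some p → w.head? = some q → q ≠ invol p

lemma toWord_pow (t : FreeGroup β) (hcr : CycRed t.toWord) :
    ∀ n : ℕ, (t ^ n).toWord = joinN n t.toWord
  | 0 => by simp [toWord_one]
  | n + 1 => by
    have IH := toWord_pow t hcr n
    rw [pow_succ', toWord_mul, IH, joinN_succ]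
    have hred : Reduced (t.toWord ++ joinN n t.toWord) := by
      rw [Reduced, List.Chain', isChain_append]
      refine ⟨reduced_toWord t, IH ▸ reduced_toWord (t ^ n), ?_⟩
      intro p hp q hq
      cases n with
      | zero => simp at hq
      | succ m =>
        rw [joinN_succ] at hq
        have hne : t.toWord ≠ [] := by
          intro h
          rw [h] at hp; simp at hp
        rw [head?_append_of_ne_nil _ hne] at hq
        exact hcr p q (by simpa using hp) (by simpa using hq)
    exact hred.reduce_eq

lemma infix_joinN (w : List (β × Bool)) (hw : w ≠ []) :
    ∀ (n : ℕ) (m s t' : List (β × Bool)), joinN n w = (s ++ m) ++ t' → m.length = w.length →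
      ∃ r, r < w.length ∧ m = w.drop r ++ w.take r := by
  intro n
  induction n with
  | zero =>
    intro m s t' he hl
    have := congrArg List.length he
    simp [joinN] at this
    have : w.length = 0 := by omega
    exact absurd (List.eq_nil_of_length_eq_zero this) hw
  | succ n IH =>
    intro m s t' he hl
    rw [joinN_succ] at he
    by_cases hsl : w.length ≤ s.length
    · have hs : w = s.take w.length := by
        calc w = (w ++ joinN n w).take w.length := (take_left' rfl).symm
        _ = ((s ++ m) ++ t').take w.length := by rw [he]
        _ = (s ++ m).take w.length := take_append_of_le (by rw [length_append]; omega)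
        _ = s.take w.length := take_append_of_le hsl
      have hdec : s = w ++ s.drop w.length := by
        conv_lhs => rw [← take_append_drop w.length s, ← hs]
      rw [hdec] at he
      have he' : joinN n w = (s.drop w.length ++ m) ++ t' := by
        apply append_cancel_left (as := w)
        rw [he]
        simp [append_assoc]
      exact IH m (s.drop w.length) t' he' hl
    · push_neg at hsl
      set r := s.length with hr
      have hs : w.take r = s := by
        calc w.take r = (w ++ joinN n w).take r := (take_append_of_le hsl.le).symm
        _ = ((s ++ m) ++ t').take r := by rw [he]
        _ = s.take r := by
            rw [take_append_of_le (by rw [length_append]; omega), take_append_of_le (le_refl _)]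
        _ = s := take_length
      have he2 : w.drop r ++ joinN n w = m ++ t' := by
        have h0 : s ++ (w.drop r ++ joinN n w) = s ++ (m ++ t') := by
          rw [← append_assoc, ← hs, take_append_drop, he, append_assoc, hs]
        exact append_cancel_left h0
      have hm : m = w.drop r ++ (joinN n w).take r := by
        have h0 : m = (w.drop r ++ joinN n w).take w.length := by
          rw [he2, ← hl, take_left]
        rwa [take_append, take_of_length_le (by rw [length_drop]; omega),
          length_drop, show w.length - (w.length - r) = r from by omega] at h0
      cases n with
      | zero =>
        simp only [joinN_zero, take_nil, append_nil] at hm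
        have hr0 : r = 0 := by
          have := congrArg List.length hm
          rw [hl, length_drop] at this
          omega
        exact ⟨0, by omega, by rw [hm, hr0]; simp⟩
      | succ k =>
        refine ⟨r, hsl, ?_⟩
        rw [hm, joinN_succ, take_append_of_le hsl.le]

end CullerAux

namespace CullerAux
set_option linter.unusedSectionVars false
open FreeGroup List

variable {β : Type*} [DecidableEq β]

lemma Reduced.ne_invRev {A : List (β × Bool)} (h : Reduced A) (hA : A ≠ []) : A ≠ invRev A := by
  intro heq
  have hk1 : 1 ≤ A.length := length_pos_iff.2 hA
  have hget : ∀ i, (hi : i < A.length) →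
      A[i] = invol (A[A.length - 1 - i]'(by omega)) := by
    intro i hi
    have h0 : A[i] = (invRev A)[i]'(by rw [invRev_length]; exact hi) :=
      getElem_of_eq heq _
    rw [h0]
    simp only [invRev_def, getElem_reverse, getElem_map, length_reverse, length_map]
  rcases Nat.even_or_odd A.length with ⟨j, hj⟩ | ⟨j, hj⟩
  · -- A.length = j + j, j ≥ 1
    have hj1 : 1 ≤ j := by omega
    have h1 := hget (j - 1) (by omega)
    have hidx : A.length - 1 - (j - 1) = j := by omega
    simp only [hidx] at h1
    -- h1 : A[j-1] = invol A[j]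
    have hc := isChain_iff_getElem.1 h (j - 1) (by omega)
    simp only [show j - 1 + 1 = j from by omega] at hc
    -- hc : A[j] ≠ invol A[j-1]
    exact hc (by rw [h1, invol_invol])
  · -- A.length = 2j+1
    have h1 := hget j (by omega)
    have hidx : A.length - 1 - j = j := by omega
    simp only [hidx] at h1
    exact invol_ne _ h1.symm

lemma not_invRev_infix {w : List (β × Bool)} (hred : Reduced w) (hw : w ≠ []) (n : ℕ) :
    ¬ (invRev w <:+: joinN n w) := by
  rintro ⟨s, t', hst⟩
  obtain ⟨r, hr, hrot⟩ := infix_joinN w hw n (invRev w) s t' (by rw [← hst]) (by simp)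
  have hsplit : invRev (w.drop r) ++ invRev (w.take r) = w.drop r ++ w.take r := by
    rw [← invRev_append', take_append_drop, ← hrot]
  have hlen : (invRev (w.drop r)).length = (w.drop r).length := by simp
  obtain ⟨hfst, -⟩ := append_inj hsplit (by simpa using hlen)
  have hd : w.drop r ≠ [] := by
    intro h0
    have := congrArg List.length h0
    rw [length_drop] at this
    simp at this
    omega
  exact Reduced.ne_invRev (show Reduced (w.drop r) from hred.suffix (drop_suffix r w)) hd
    hfst.symm

lemma cyc_decomp_aux : ∀ (N : ℕ) (z : FreeGroup β), z.toWord.length ≤ N → z ≠ 1 →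
    ∃ u t : FreeGroup β, z = u * t * u⁻¹ ∧ t ≠ 1 ∧ CycRed t.toWord := by
  intro N
  induction N with
  | zero =>
    intro z hlen hz
    exact absurd (toWord_eq_nil_iff.1 (eq_nil_of_length_eq_zero (by omega))) hz
  | succ N IH =>
    intro z hlen hz
    by_cases hc : CycRed z.toWord
    · exact ⟨1, z, by group, hz, hc⟩
    · rw [CycRed] at hc
      push_neg at hc
      obtain ⟨p, q, hp, hq, hpq⟩ := hc
      subst hpq
      have hwne : z.toWord ≠ [] := fun h => hz (toWord_eq_nil_iff.1 h)
      -- z.toWord = invol p :: mid ++ [p]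
      obtain ⟨w', hw'⟩ : ∃ w', z.toWord = invol p :: w' := by
        cases hzw : z.toWord with
        | nil => exact absurd hzw hwne
        | cons a l =>
          rw [hzw] at hq
          simp at hq
          exact ⟨l, by rw [hq]⟩
      have hw'ne : w' ≠ [] := by
        rintro rfl
        rw [hw'] at hp
        simp only [getLast?_singleton, Option.some_inj] at hp
        exact invol_ne p hp
      obtain ⟨mid, b, hmid⟩ := (eq_nil_or_concat w').resolve_left hw'ne
      have hb : p = b := by
        have h5 : z.toWord.getLast? = some b := by
          rw [hw', hmid, concat_eq_append, ← cons_append, getLast?_concat]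
        rw [hp] at h5
        exact Option.some_inj.1 h5
      subst hb
      have hw : z.toWord = invol p :: (mid ++ [p]) := by
        rw [hw', hmid, concat_eq_append]
      have hmidred : Reduced mid := by
        have := reduced_toWord z
        rw [hw] at this
        exact (this.tail).prefix (mid.prefix_append [p])
      have hmidne : mid ≠ [] := by
        rintro rfl
        have := reduced_toWord z
        rw [hw] at this
        simp only [nil_append] at this
        exact (isChain_cons_cons.1 this).1 (by rw [invol_invol])
      -- z = (mk [p])⁻¹ * mk mid * mk [p]
      have hinv : (mk [p] : FreeGroup β)⁻¹ = mk [invol p] := by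
        rw [inv_mk, invRev_singleton]
      have hz' : z = (mk [p])⁻¹ * mk mid * ((mk [p])⁻¹)⁻¹ := by
        rw [inv_inv, hinv]
        conv_lhs => rw [← mk_toWord (x := z), hw]
        rw [mul_mk, mul_mk]
        exact congrArg mk (by simp)
      have hmidword : (mk mid : FreeGroup β).toWord = mid := by
        rw [toWord_mk]; exact hmidred.reduce_eq
      have hmidlen : (mk mid : FreeGroup β).toWord.length ≤ N := by
        rw [hmidword]
        have := congrArg List.length hw
        simp at this
        omega
      have hmidne1 : (mk mid : FreeGroup β) ≠ 1 := by
        intro h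
        rw [← toWord_eq_nil_iff, hmidword] at h
        exact hmidne h
      obtain ⟨u, t, hut, ht1, htc⟩ := IH (mk mid) hmidlen hmidne1
      refine ⟨(mk [p])⁻¹ * u, t, ?_, ht1, htc⟩
      rw [hz', hut]
      group

end CullerAux

namespace CullerAux
set_option linter.unusedSectionVars false
open FreeGroup List

variable {β : Type*} [DecidableEq β]

lemma invRev_ne_nil {w : List (β × Bool)} (hw : w ≠ []) : invRev w ≠ [] := by
  intro h
  have := congrArg List.length h
  rw [invRev_length] at this
  exact hw (eq_nil_of_length_eq_zero this)

/-- the Brooks-type hat function on words. -/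
def phih (w l : List (β × Bool)) : ℤ := (cnt w l : ℤ) - (cnt (invRev w) l : ℤ)

/-- the Brooks-type quasimorphism. -/
def phi (w : List (β × Bool)) (g : FreeGroup β) : ℤ := phih w g.toWord

lemma phih_append (w : List (β × Bool)) (hw : w ≠ []) (u v : List (β × Bool)) :
    |phih w (u ++ v) - phih w u - phih w v| ≤ 2 * w.length := by
  have h1 := cnt_append_ge w u v
  have h2 := cnt_append_le w u v
  have h3 := cnt_append_ge (invRev w) u v
  have h4 := cnt_append_le (invRev w) u v
  have h5 : (invRev w).length = w.length := invRev_length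
  have h6 : 1 ≤ w.length := length_pos_iff.2 hw
  rw [phih, phih, phih, abs_le]
  constructor <;> push_cast <;> omega

lemma phih_invRev (w : List (β × Bool)) (hw : w ≠ []) (l : List (β × Bool)) :
    phih w (invRev l) = - phih w l := by
  rw [phih, phih, cnt_invRev w hw, cnt_invRev (invRev w) (invRev_ne_nil hw), invRev_invRev]
  ring

lemma phi_mul (w : List (β × Bool)) (hw : w ≠ []) (x y : FreeGroup β) :
    |phi w (x * y) - phi w x - phi w y| ≤ 6 * w.length := by
  obtain ⟨a, b, c, hx, hy, hxy⟩ :=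
    mul_decomp x.toWord y.toWord (reduced_toWord x) (reduced_toWord y)
  have h1 : phi w (x * y) = phih w (a ++ b) := by rw [phi, toWord_mul, hxy]
  have h2 : phi w x = phih w (a ++ c) := by rw [phi, hx]
  have h3 : phi w y = phih w (invRev c ++ b) := by rw [phi, hy]
  have d1 := phih_append w hw a b
  have d2 := phih_append w hw a c
  have d3 := phih_append w hw (invRev c) b
  have hinv := phih_invRev w hw c
  rw [h1, h2, h3]
  rw [abs_le] at d1 d2 d3 ⊢
  omega

lemma phi_one (w : List (β × Bool)) : phi w 1 = 0 := by
  simp [phi, phih, toWord_one]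

lemma phi_inv (w : List (β × Bool)) (hw : w ≠ []) (x : FreeGroup β) :
    |phi w x + phi w x⁻¹| ≤ 6 * w.length := by
  have h := phi_mul w hw x x⁻¹
  rw [mul_inv_cancel, phi_one] at h
  rw [abs_le] at h ⊢
  omega

lemma phi_comm (w : List (β × Bool)) (hw : w ≠ []) (x y : FreeGroup β) :
    |phi w ⁅x, y⁆| ≤ 30 * w.length := by
  have d1 := phi_mul w hw (x * y * x⁻¹) y⁻¹
  have d2 := phi_mul w hw (x * y) x⁻¹
  have d3 := phi_mul w hw x y
  have e1 := phi_inv w hw x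
  have e2 := phi_inv w hw y
  rw [commutatorElement_def]
  rw [abs_le] at d1 d2 d3 e1 e2 ⊢
  omega

lemma phi_prod (w : List (β × Bool)) (hw : w ≠ []) :
    ∀ gs : List (FreeGroup β), (∀ g ∈ gs, |phi w g| ≤ 30 * w.length) →
      |phi w gs.prod| ≤ 36 * w.length * gs.length
  | [], _ => by simp [phi_one]
  | g :: gs, hg => by
    have h1 := phi_prod w hw gs (fun x hx => hg x (mem_cons_of_mem _ hx))
    have h3 := hg g (mem_cons_self)
    have h2 := phi_mul w hw g gs.prod
    rw [prod_cons, length_cons]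
    have tri : |phi w (g * gs.prod)| ≤
        |phi w (g * gs.prod) - phi w g - phi w gs.prod| + |phi w g| + |phi w gs.prod| := by
      calc |phi w (g * gs.prod)|
          = |(phi w (g * gs.prod) - phi w g - phi w gs.prod) + phi w g + phi w gs.prod| := by
            ring_nf
        _ ≤ _ := abs_add_three _ _ _
    have hmul : (36:ℤ) * w.length * ((gs.length : ℤ) + 1)
        = 36 * w.length * gs.length + 36 * w.length := by ring
    push_cast
    push_cast at h1
    linarith

lemma phi_pow_ge (t : FreeGroup β) (ht : t ≠ 1) (hcr : CycRed t.toWord) (n : ℕ) :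
    (n : ℤ) ≤ phi t.toWord (t ^ n) := by
  have hw : t.toWord ≠ [] := fun h => ht (toWord_eq_nil_iff.1 h)
  rw [phi, phih, toWord_pow t hcr n]
  have h1 := cnt_joinN t.toWord hw n
  have h2 : cnt (invRev t.toWord) (joinN n t.toWord) = 0 :=
    cnt_eq_zero _ _ (not_invRev_infix (reduced_toWord t) hw n)
  omega

theorem key (z : FreeGroup β) (hz : z ≠ 1) :
    ∃ D : ℕ, 1 ≤ D ∧ ∀ (n g : ℕ) (x y : Fin g → FreeGroup β), 1 ≤ g →
      z ^ n = (List.ofFn fun i : Fin g => ⁅x i, y i⁆).prod → (n : ℤ) ≤ 9 * D * g := by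
  obtain ⟨u, t, hconj, ht1, htc⟩ := cyc_decomp_aux z.toWord.length z le_rfl hz
  set w := t.toWord with hwdef
  have hw : w ≠ [] := fun h => ht1 (toWord_eq_nil_iff.1 h)
  have hL : 1 ≤ w.length := length_pos_iff.2 hw
  refine ⟨6 * w.length, by omega, ?_⟩
  intro n g x y hg heq
  have hzn : z ^ n = u * t ^ n * u⁻¹ := by rw [hconj, conj_pow]
  have d1 := phi_mul w hw (u * t ^ n) u⁻¹
  have d2 := phi_mul w hw u (t ^ n)
  have e1 := phi_inv w hw u
  have hgrow := phi_pow_ge t ht1 htc n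
  have hcommbound : ∀ gg ∈ (List.ofFn fun i : Fin g => ⁅x i, y i⁆), |phi w gg| ≤ 30 * w.length := by
    intro gg hgg
    rw [List.mem_ofFn] at hgg
    obtain ⟨i, rfl⟩ := hgg
    exact phi_comm w hw (x i) (y i)
  have hupper := phi_prod w hw _ hcommbound
  rw [← heq, hzn, List.length_ofFn] at hupper
  have hgr : (1:ℤ) ≤ (g : ℤ) := by exact_mod_cast hg
  have hLr : (1:ℤ) ≤ (w.length : ℤ) := by exact_mod_cast hL
  have hmono : (18:ℤ) * w.length ≤ 18 * w.length * g := by nlinarith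
  rw [abs_le] at d1 d2 e1 hupper
  push_cast
  nlinarith
end CullerAux

/-- (Culler) For a nontrivial element `z` of the commutator subgroup of a finitely
generated free group `F`, there is `c > 0` such that whenever `zⁿ` (with `n ≥ 1`) is a
product of `g ≥ 1` commutators, `g ≥ c⬝n`: the genus norm of `zⁿ` grows linearly. -/
theorem culler_genus_norm_linear {F : Type*} [Group F] [IsFreeGroup F]
    (hFG : Group.FG F) (z : F) (hz : z ∈ commutator F) (hz1 : z ≠ 1) :
    ∃ c : ℝ, 0 < c ∧ ∀ (n g : ℕ) (x y : Fin g → F), 1 ≤ n → 1 ≤ g →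
      z ^ n = (List.ofFn fun i : Fin g => ⁅x i, y i⁆).prod →
      c * n ≤ (g : ℝ) := by
  obtain ⟨ι, ⟨bb⟩⟩ := IsFreeGroup.nonempty_basis (G := F)
  letI : DecidableEq ι := Classical.decEq ι
  set e := bb.repr with he
  have hz' : e z ≠ 1 := fun h => hz1 (by simpa using e.injective (by simpa using h))
  obtain ⟨D, hD, hkey⟩ := CullerAux.key (e z) hz'
  have hD1 : (1:ℝ) ≤ D := by exact_mod_cast hD
  have hDpos : (0:ℝ) < 9 * D := by linarith
  refine ⟨1 / (9 * D), by positivity, ?_⟩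
  intro n g x y hn hg heq
  have heq' : (e z) ^ n = (List.ofFn fun i : Fin g => ⁅e (x i), e (y i)⁆).prod := by
    rw [← map_pow, heq, map_list_prod, List.map_ofFn]
    exact congrArg List.prod (congrArg List.ofFn
      (funext fun i => map_commutatorElement e (x i) (y i)))
  have hbound : (n : ℤ) ≤ 9 * D * g := hkey n g _ _ hg heq'
  have hboundR : (n : ℝ) ≤ 9 * D * g := by exact_mod_cast hbound
  rw [div_mul_eq_mul_div, one_mul, div_le_iff₀ hDpos]
  linarith [mul_comm (g : ℝ) (9 * (D:ℝ))]
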